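/- Let 0 < α ≤ 1 and let n ≥ 2 be an integer. Then the function h_{n,α}(x) = (α n/(2|x|^{α+1})) (1 − |x|^{−α})^{n−2} (1 − α + (αn − 1)|x|^{−α}) 1_{(1,∞)}(|x|) is a probability density on ℝ, and ∫_ℝ (1 − |t x|)_+ h_{n,α}(x) dx = ((1 − |t|^α)_+)^n for all t ∈ ℝ. (Consequently the n-fold classical convolution power μ_α^{*n} equals the scale mixture μ_1 ∘ λ_{n,α}, where λ_{n,α} has density h_{n,α} and μ_1 has characteristic function (1 − |t|)_+.) -/

import Mathlib

open MeasureTheory Set Filter Topology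

/-- The density `h_{n,α}` of `(α δ̃₁ + (1-α) π̃_α)^{⊗_{μ₁} n}`:
`h_{n,α}(x) = (α n/(2|x|^(α+1))) (1 - |x|^(-α))^(n-2) (1 - α + (α n - 1)|x|^(-α))`
for `|x| > 1`, and `0` otherwise. -/
noncomputable def kendallMixDensity (α : ℝ) (n : ℕ) (x : ℝ) : ℝ :=
  if 1 < |x| then
    α * n / (2 * |x| ^ (α + 1)) * (1 - |x| ^ (-α)) ^ (n - 2)
      * (1 - α + (α * n - 1) * |x| ^ (-α))
  else 0

/-- The density expression without the absolute value and indicator. -/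
noncomputable def kendallH (α : ℝ) (n : ℕ) (x : ℝ) : ℝ :=
  α * n / (2 * x ^ (α + 1)) * (1 - x ^ (-α)) ^ (n - 2) * (1 - α + (α * n - 1) * x ^ (-α))

/-- The antiderivative used in the computation. -/
noncomputable def kendallPsi (α : ℝ) (n : ℕ) (s : ℝ) (x : ℝ) : ℝ :=
  (1/2) * (1 - x ^ (-α)) ^ (n - 1) * (1 + (α * n - 1) * x ^ (-α) - s * (α * n) * x ^ (1 - α))

lemma kendallMixDensity_eq (α : ℝ) (n : ℕ) (x : ℝ) :
    kendallMixDensity α n x = if 1 < |x| then kendallH α n |x| else 0 := rfl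

lemma kendallH_nonneg {α : ℝ} (hα : 0 < α) (hα1 : α ≤ 1) {n : ℕ} (hn : 2 ≤ n)
    {x : ℝ} (hx : 1 ≤ x) : 0 ≤ kendallH α n x := by
  have hx0 : (0:ℝ) < x := lt_of_lt_of_le one_pos hx
  have hu0 : 0 ≤ x ^ (-α) := Real.rpow_nonneg hx0.le _
  have hu1 : x ^ (-α) ≤ 1 := Real.rpow_le_one_of_one_le_of_nonpos hx (by linarith)
  have hxp : 0 < x ^ (α + 1) := Real.rpow_pos_of_pos hx0 _
  have hn2 : (2:ℝ) ≤ (n:ℝ) := by exact_mod_cast hn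
  have h2 : (0:ℝ) ≤ 1 - α + (α * n - 1) * x ^ (-α) := by
    nlinarith [mul_nonneg (sub_nonneg.2 hu1) (sub_nonneg.2 hα1),
      mul_nonneg hu0 (mul_nonneg hα.le (by linarith : (0:ℝ) ≤ (n:ℝ) - 1))]
  have h1 : 0 ≤ α * n / (2 * x ^ (α + 1)) := by positivity
  exact mul_nonneg (mul_nonneg h1 (pow_nonneg (by linarith) _)) h2

lemma kendallPsi_hasDerivAt {α : ℝ} (hα : 0 < α) {n : ℕ} (hn : 2 ≤ n) (s : ℝ)
    {x : ℝ} (hx : 0 < x) :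
    HasDerivAt (kendallPsi α n s) ((1 - s * x) * kendallH α n x) x := by
  have hx0 : x ≠ 0 := hx.ne'
  have hu : HasDerivAt (fun y : ℝ => y ^ (-α)) (-α * x ^ (-α - 1)) x := by
    simpa using Real.hasDerivAt_rpow_const (p := -α) (Or.inl hx0)
  have hv : HasDerivAt (fun y : ℝ => y ^ (1 - α)) ((1 - α) * x ^ (-α)) x := by
    have := Real.hasDerivAt_rpow_const (p := 1 - α) (Or.inl hx0)
    simpa [show 1 - α - 1 = -α by ring] using this
  have hA : HasDerivAt (fun y : ℝ => (1 - y ^ (-α)) ^ (n - 1))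
      (((n:ℝ) - 1) * (1 - x ^ (-α)) ^ (n - 2) * (0 - (-α * x ^ (-α - 1)))) x := by
    have h := (((hasDerivAt_const x (1:ℝ)).sub hu).pow (n - 1))
    have hcast : ((n - 1 : ℕ) : ℝ) = (n:ℝ) - 1 := by
      have : (1:ℕ) ≤ n := by omega
      push_cast [Nat.cast_sub this]; ring
    rw [show n - 1 - 1 = n - 2 by omega, hcast] at h
    exact h
  have hB : HasDerivAt (fun y : ℝ => 1 + (α * n - 1) * y ^ (-α) - s * (α * n) * y ^ (1 - α))
      ((α * n - 1) * (-α * x ^ (-α - 1)) - s * (α * n) * ((1 - α) * x ^ (-α))) x := by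
    have h := ((hasDerivAt_const x (1:ℝ)).add (hu.const_mul (α * n - 1))).sub
      (hv.const_mul (s * (α * n)))
    exact h.congr_deriv (by ring)
  have h := (hA.mul hB).const_mul (1/2 : ℝ)
  have hgoal :
      (1/2 : ℝ) * ((((n:ℝ) - 1) * (1 - x ^ (-α)) ^ (n - 2) * (0 - (-α * x ^ (-α - 1)))) *
          (1 + (α * n - 1) * x ^ (-α) - s * (α * n) * x ^ (1 - α)) +
        (1 - x ^ (-α)) ^ (n - 1) *
          ((α * n - 1) * (-α * x ^ (-α - 1)) - s * (α * n) * ((1 - α) * x ^ (-α))))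
      = (1 - s * x) * kendallH α n x := by
    have hup : (0:ℝ) < x ^ (-α) := Real.rpow_pos_of_pos hx _
    have e1 : x ^ (-α - 1) = x ^ (-α) / x := by
      rw [show -α - 1 = -α + (-1) by ring, Real.rpow_add hx, Real.rpow_neg_one]
      ring
    have e2 : x ^ (1 - α) = x * x ^ (-α) := by
      rw [show 1 - α = 1 + (-α) by ring, Real.rpow_add hx, Real.rpow_one]
    have e3 : x ^ (α + 1) = x / x ^ (-α) := by
      rw [show α + 1 = -(-α) + 1 by ring, Real.rpow_add hx, Real.rpow_one,
        Real.rpow_neg hx.le]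
      field_simp
    have e4 : (1 - x ^ (-α)) ^ (n - 1) = (1 - x ^ (-α)) ^ (n - 2) * (1 - x ^ (-α)) := by
      rw [← pow_succ]; congr 1; omega
    unfold kendallH
    rw [e1, e2, e4, e3]
    field_simp
    ring
  have hfun : (fun y : ℝ => (1/2:ℝ) * ((1 - y ^ (-α)) ^ (n - 1) *
      (1 + (α * n - 1) * y ^ (-α) - s * (α * n) * y ^ (1 - α)))) = kendallPsi α n s := by
    funext y; unfold kendallPsi; ring
  rw [hgoal] at h
  rw [← hfun]; exact h

lemma kendallPsi_one {α : ℝ} (n : ℕ) (hn : 2 ≤ n) (s : ℝ) : kendallPsi α n s 1 = 0 := by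
  unfold kendallPsi
  rw [Real.one_rpow]
  simp [zero_pow (show n - 1 ≠ 0 by omega)]

lemma kendall_aux {α : ℝ} (hα : 0 < α) (hα1 : α ≤ 1) {n : ℕ} (hn : 2 ≤ n)
    {s : ℝ} (hs : 0 ≤ s) :
    IntegrableOn (fun x => max (1 - s * x) 0 * kendallH α n x) (Ioi (1:ℝ)) ∧
    ∫ x in Ioi (1:ℝ), max (1 - s * x) 0 * kendallH α n x
      = (1/2) * (max (1 - s ^ α) 0) ^ n := by
  set F : ℝ → ℝ := fun x => max (1 - s * x) 0 * kendallH α n x with hF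
  have hFnonneg : ∀ x ∈ Ioi (1:ℝ), 0 ≤ F x := fun x hx =>
    mul_nonneg (le_max_right _ _) (kendallH_nonneg hα hα1 hn hx.out.le)
  rcases le_or_gt 1 s with hs1 | hs1
  · -- s ≥ 1 : everything vanishes
    have hF0 : ∀ x ∈ Ioi (1:ℝ), F x = 0 := by
      intro x hx
      have hx1 : (1:ℝ) < x := hx
      have : 1 - s * x ≤ 0 := by nlinarith
      simp [hF, max_eq_right this]
    have hmax : max (1 - s ^ α) 0 = 0 := by
      have : (1:ℝ) ≤ s ^ α := Real.one_le_rpow hs1 hα.le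
      exact max_eq_right (by linarith)
    constructor
    · exact (integrableOn_zero).congr_fun (fun x hx => (hF0 x hx).symm) measurableSet_Ioi
    · rw [setIntegral_congr_fun measurableSet_Ioi hF0]
      simp [hmax, zero_pow (show n ≠ 0 by omega)]
  · rcases eq_or_lt_of_le hs with hs0 | hs0
    · -- s = 0
      subst hs0
      have hcont : ContinuousWithinAt (kendallPsi α n 0) (Ici (1:ℝ)) 1 :=
        (kendallPsi_hasDerivAt hα hn 0 one_pos).continuousAt.continuousWithinAt
      have hderiv : ∀ x ∈ Ioi (1:ℝ), HasDerivAt (kendallPsi α n 0) (F x) x := by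
        intro x hx
        have h := kendallPsi_hasDerivAt hα hn 0 (lt_trans one_pos hx.out)
        have : F x = (1 - 0 * x) * kendallH α n x := by
          simp [hF]
        rw [this]
        exact h
      have htend : Tendsto (kendallPsi α n 0) atTop (𝓝 (1/2)) := by
        have h0 : Tendsto (fun x : ℝ => x ^ (-α)) atTop (𝓝 0) := tendsto_rpow_neg_atTop hα
        have hφ : Continuous (fun u : ℝ => (1/2) * (1 - u) ^ (n-1) * (1 + (α * n - 1) * u)) := by
          continuity
        have h1 : Tendsto (fun x : ℝ =>
            (1/2) * (1 - x ^ (-α)) ^ (n-1) * (1 + (α * n - 1) * x ^ (-α))) atTop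
            (𝓝 ((1/2) * (1 - (0:ℝ)) ^ (n-1) * (1 + (α * n - 1) * 0))) :=
          (hφ.tendsto 0).comp h0
        have heq : kendallPsi α n 0 = fun x : ℝ =>
            (1/2) * (1 - x ^ (-α)) ^ (n-1) * (1 + (α * n - 1) * x ^ (-α)) := by
          funext y; unfold kendallPsi; ring
        rw [heq]
        convert h1 using 2
        norm_num
      constructor
      · exact integrableOn_Ioi_deriv_of_nonneg hcont hderiv hFnonneg htend
      · rw [integral_Ioi_of_hasDerivAt_of_nonneg hcont hderiv hFnonneg htend,
          kendallPsi_one n hn 0]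
        simp [Real.zero_rpow hα.ne']
    · -- 0 < s < 1
      set b : ℝ := 1 / s with hb_def
      have hb : (1:ℝ) < b := by
        rw [hb_def]
        exact one_lt_one_div hs0 hs1
      have hq1 : s ^ α ≤ 1 := Real.rpow_le_one hs hs1.le hα.le
      set c : ℝ := (1/2) * (1 - s ^ α) ^ n with hc_def
      set g : ℝ → ℝ := fun x => if x < b then kendallPsi α n s x else c with hg_def
      have hbpos : (0:ℝ) < b := lt_trans one_pos hb
      have key : kendallPsi α n s b = c := by
        have e1 : b ^ (-α) = s ^ α := by
          rw [hb_def, one_div, Real.inv_rpow hs, Real.rpow_neg hs, inv_inv]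
        have e2 : b ^ (1 - α) = s ^ (α - 1) := by
          rw [hb_def, one_div, Real.inv_rpow hs, ← Real.rpow_neg hs]
          ring_nf
        have e3 : s * s ^ (α - 1) = s ^ α := by
          nth_rewrite 1 [← Real.rpow_one s]
          rw [← Real.rpow_add hs0]
          ring_nf
        unfold kendallPsi
        rw [e1, e2, hc_def]
        have e4 : 1 + (α * n - 1) * s ^ α - s * (α * n) * s ^ (α - 1)
            = 1 - s ^ α := by
          rw [show s * (α * n) * s ^ (α - 1) = (α * n) * (s * s ^ (α - 1)) by ring, e3]
          ring
        rw [e4, mul_assoc, ← pow_succ]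
        congr 2
        omega
      have hg1 : g 1 = 0 := by
        rw [hg_def]
        simp only [if_pos hb]
        exact kendallPsi_one n hn s
      have hgPsi : g =ᶠ[𝓝 (1:ℝ)] kendallPsi α n s :=
        eventually_of_mem (Iio_mem_nhds hb) (fun y hy => if_pos hy)
      have hcont : ContinuousWithinAt g (Ici (1:ℝ)) 1 := by
        exact (((kendallPsi_hasDerivAt hα hn s one_pos).continuousAt.congr
          hgPsi.symm)).continuousWithinAt
      have hderiv : ∀ x ∈ Ioi (1:ℝ), HasDerivAt g (F x) x := by
        intro x hx
        have hx0 : (0:ℝ) < x := lt_trans one_pos hx.out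
        rcases lt_trichotomy x b with hxb | hxb | hxb
        · have hev : g =ᶠ[𝓝 x] kendallPsi α n s :=
            eventually_of_mem (Iio_mem_nhds hxb) (fun y hy => if_pos hy)
          have h := (kendallPsi_hasDerivAt hα hn s hx0).congr_of_eventuallyEq hev
          have hmax : max (1 - s * x) 0 = 1 - s * x := by
            have : s * x < 1 := by
              rw [hb_def] at hxb
              calc s * x < s * (1/s) := by exact mul_lt_mul_of_pos_left hxb hs0
              _ = 1 := by rw [mul_one_div, div_self hs0.ne']
            exact max_eq_left (by linarith)
          rw [hF]
          simp only [hmax]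
          exact h
        · subst hxb
          have h1 : 1 - s * b = 0 := by
            rw [hb_def, mul_one_div, div_self hs0.ne', sub_self]
          have hFb : F b = 0 := by
            simp [hF, h1]
          rw [hFb]
          have hIci : HasDerivWithinAt g 0 (Ici b) b := by
            refine (hasDerivWithinAt_const b (Ici b) c).congr (fun y hy => ?_) ?_
            · exact if_neg (not_lt.2 hy)
            · exact if_neg (lt_irrefl b)
          have hIio : HasDerivWithinAt g 0 (Iio b) b := by
            have h := (kendallPsi_hasDerivAt hα hn s hbpos).hasDerivWithinAt (s := Iio b)
            have h0 : (1 - s * b) * kendallH α n b = 0 := by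
              rw [h1, zero_mul]
            rw [h0] at h
            refine h.congr (fun y hy => if_pos hy) ?_
            exact (if_neg (lt_irrefl b)).trans key.symm
          have hu2 := hIio.union hIci
          rw [Iio_union_Ici] at hu2
          exact hasDerivWithinAt_univ.1 hu2
        · have hev : g =ᶠ[𝓝 x] (fun _ => c) :=
            eventually_of_mem (Ioi_mem_nhds hxb) (fun y hy => if_neg (not_lt.2 (le_of_lt hy)))
          have h := (hasDerivAt_const x c).congr_of_eventuallyEq hev
          have hFx : F x = 0 := by
            have : 1 - s * x < 0 := by
              have : 1 < s * x := by
                rw [hb_def] at hxb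
                calc (1:ℝ) = s * (1/s) := by rw [mul_one_div, div_self hs0.ne']
                _ < s * x := by exact mul_lt_mul_of_pos_left hxb hs0
              linarith
            simp [hF, max_eq_right (le_of_lt this)]
          rw [hFx]
          exact h
      have htend : Tendsto g atTop (𝓝 c) := by
        refine tendsto_const_nhds.congr' ?_
        filter_upwards [eventually_gt_atTop b] with y hy
        exact (if_neg (not_lt.2 hy.le)).symm
      constructor
      · exact integrableOn_Ioi_deriv_of_nonneg hcont hderiv hFnonneg htend
      · rw [integral_Ioi_of_hasDerivAt_of_nonneg hcont hderiv hFnonneg htend, hg1, sub_zero,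
          hc_def, max_eq_left (by linarith : (0:ℝ) ≤ 1 - s ^ α)]

/-- For `0 < α ≤ 1` and `n ≥ 2`, the function `h_{n,α}` is a probability density on `ℝ`
and `∫ (1 - |t x|)_+ h_{n,α}(x) dx = ((1 - |t|^α)_+)^n` for all `t`.  Consequently the
`n`-fold classical convolution power `μ_α^{*n}` is the scale mixture of `μ₁` (the measure
with characteristic function `(1 - |t|)_+`) by the measure with density `h_{n,α}`. -/
theorem kendallMixDensity_prob
    (α : ℝ) (hα : 0 < α) (hα1 : α ≤ 1) (n : ℕ) (hn : 2 ≤ n) :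
    (∀ x : ℝ, 0 ≤ kendallMixDensity α n x)
    ∧ (∫ x : ℝ, kendallMixDensity α n x) = 1
    ∧ ∀ t : ℝ,
        ∫ x : ℝ, max (1 - |t * x|) 0 * kendallMixDensity α n x
          = (max (1 - |t| ^ α) 0) ^ n := by
  have h3 : ∀ t : ℝ,
      ∫ x : ℝ, max (1 - |t * x|) 0 * kendallMixDensity α n x
        = (max (1 - |t| ^ α) 0) ^ n := by
    intro t
    set s := |t| with hs_def
    have hs : 0 ≤ s := abs_nonneg t
    obtain ⟨hint, hval⟩ := kendall_aux hα hα1 hn hs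
    set fp : ℝ → ℝ := indicator (Ioi 1) (fun x => max (1 - s * x) 0 * kendallH α n x)
      with hfp
    have hpt : ∀ x : ℝ, max (1 - |t * x|) 0 * kendallMixDensity α n x = fp x + fp (-x) := by
      intro x
      rw [kendallMixDensity_eq]
      rcases lt_or_ge 1 |x| with hx | hx
      · rw [if_pos hx, abs_mul, ← hs_def]
        rcases abs_cases x with ⟨h1, h2⟩ | ⟨h1, h2⟩
        · have hx1 : (1:ℝ) < x := h1 ▸ hx
          have e1 : fp x = max (1 - s * x) 0 * kendallH α n x :=
            indicator_of_mem (show x ∈ Ioi (1:ℝ) from hx1) _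
          have e2 : fp (-x) = 0 :=
            indicator_of_notMem (by simp only [mem_Ioi, not_lt]; linarith) _
          rw [h1, e1, e2, add_zero]
        · have hx1 : (1:ℝ) < -x := h1 ▸ hx
          have e1 : fp x = 0 :=
            indicator_of_notMem (by simp only [mem_Ioi, not_lt]; linarith) _
          have e2 : fp (-x) = max (1 - s * (-x)) 0 * kendallH α n (-x) :=
            indicator_of_mem (show -x ∈ Ioi (1:ℝ) from hx1) _
          rw [h1, e1, e2, zero_add]
      · rw [if_neg (not_lt.2 hx), mul_zero]
        have e1 : fp x = 0 :=
          indicator_of_notMem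
            (by simp only [mem_Ioi, not_lt]; exact le_trans (le_abs_self x) hx) _
        have e2 : fp (-x) = 0 :=
          indicator_of_notMem
            (by
              simp only [mem_Ioi, not_lt]
              calc -x ≤ |(-x)| := le_abs_self _
              _ = |x| := abs_neg x
              _ ≤ 1 := hx) _
        rw [e1, e2, add_zero]
    simp only [hpt]
    have hfpInt : Integrable fp := hint.integrable_indicator measurableSet_Ioi
    have hfpNegInt : Integrable (fun x => fp (-x)) := hfpInt.comp_neg
    rw [integral_add hfpInt hfpNegInt, integral_neg_eq_self,
      hfp, integral_indicator measurableSet_Ioi, hval]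
    ring
  refine ⟨?_, ?_, h3⟩
  · intro x
    rw [kendallMixDensity_eq]
    split_ifs with hx
    · exact kendallH_nonneg hα hα1 hn (le_of_lt hx)
    · exact le_refl 0
  · have h := h3 0
    simp only [zero_mul, abs_zero, sub_zero, Real.zero_rpow hα.ne'] at h
    rw [max_eq_left zero_le_one, one_pow] at h
    simpa using h
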